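/- The class of finite groups has the Hrushovski property: let G be a finite group, let n ≥ 1, and for each i = 1,…,n let Bᵢ and Cᵢ be subgroups of G and let ψᵢ : Bᵢ → Cᵢ be a group isomorphism. Then there exist a finite group D, an injective group homomorphism e : G → D, and automorphisms φ₁,…,φₙ of D such that φᵢ(e(b)) = e(ψᵢ(b)) for every b ∈ Bᵢ and every i. -/

import Mathlib

private lemma mem_of_out {G : Type} [Group G] (B : Subgroup G) (g : G) :
    ((g : G ⧸ B).out)⁻¹ * g ∈ B :=
  QuotientGroup.eq.mp (QuotientGroup.out_eq' (s := B) (g : G ⧸ B))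

/-- The equivariant map used to build the intertwining permutation. -/
private noncomputable def phiFun {G : Type} [Group G] (B C : Subgroup G) (ψ : B ≃* C)
    (f : (G ⧸ B) ≃ (G ⧸ C)) (g : G) : G :=
  (f (g : G ⧸ B)).out * (ψ ⟨((g : G ⧸ B).out)⁻¹ * g, mem_of_out B g⟩ : G)

private lemma phiFun_mk {G : Type} [Group G] (B C : Subgroup G) (ψ : B ≃* C)
    (f : (G ⧸ B) ≃ (G ⧸ C)) (g : G) :
    ((phiFun B C ψ f g : G) : G ⧸ C) = f (g : G ⧸ B) := by
  unfold phiFun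
  rw [QuotientGroup.mk_mul_of_mem _ (ψ _).2, QuotientGroup.out_eq']

private lemma phiFun_inv {G : Type} [Group G] (B C : Subgroup G) (ψ : B ≃* C)
    (f : (G ⧸ B) ≃ (G ⧸ C)) (g : G) :
    phiFun C B ψ.symm f.symm (phiFun B C ψ f g) = g := by
  set c : C := ψ ⟨((g : G ⧸ B).out)⁻¹ * g, mem_of_out B g⟩ with hc
  have hP : phiFun B C ψ f g = (f (g : G ⧸ B)).out * (c : G) := rfl
  have h1 : ((phiFun B C ψ f g : G) : G ⧸ C) = f (g : G ⧸ B) := phiFun_mk B C ψ f g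
  have h3 : (⟨(((phiFun B C ψ f g : G) : G ⧸ C).out)⁻¹ * phiFun B C ψ f g,
      mem_of_out C _⟩ : C) = c := by
    apply Subtype.ext
    show (((phiFun B C ψ f g : G) : G ⧸ C).out)⁻¹ * phiFun B C ψ f g = (c : G)
    rw [h1, hP, inv_mul_cancel_left]
  show (f.symm ((phiFun B C ψ f g : G) : G ⧸ C)).out *
      ((ψ.symm ⟨(((phiFun B C ψ f g : G) : G ⧸ C).out)⁻¹ * phiFun B C ψ f g,
        mem_of_out C _⟩ : B) : G) = g
  rw [h3, h1, f.symm_apply_apply, hc, ψ.symm_apply_apply]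
  show ((g : G ⧸ B).out) * (((g : G ⧸ B).out)⁻¹ * g) = g
  exact mul_inv_cancel_left _ _

private lemma phiFun_equivariant {G : Type} [Group G] (B C : Subgroup G) (ψ : B ≃* C)
    (f : (G ⧸ B) ≃ (G ⧸ C)) (g : G) (b : B) :
    phiFun B C ψ f (g * b) = phiFun B C ψ f g * (ψ b : G) := by
  have hq : ((g * (b : G) : G) : G ⧸ B) = (g : G ⧸ B) :=
    QuotientGroup.mk_mul_of_mem g b.2
  have h3 : (⟨(((g * (b : G) : G) : G ⧸ B).out)⁻¹ * (g * b), mem_of_out B _⟩ : B)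
      = ⟨((g : G ⧸ B).out)⁻¹ * g, mem_of_out B g⟩ * b := by
    apply Subtype.ext
    show (((g * (b : G) : G) : G ⧸ B).out)⁻¹ * (g * b)
      = (((g : G ⧸ B).out)⁻¹ * g) * b
    rw [hq, mul_assoc]
  unfold phiFun
  rw [h3, hq, map_mul, mul_assoc]
  rfl

private theorem key {G : Type} [Group G] [Finite G] (B C : Subgroup G) (ψ : B ≃* C) :
    ∃ σ : Equiv.Perm G, ∀ (g : G) (b : B), σ (g * b) = σ g * (ψ b : G) := by
  have hB : 0 < Nat.card B := Nat.card_pos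
  have h1 := Subgroup.card_eq_card_quotient_mul_card_subgroup B
  have h2 := Subgroup.card_eq_card_quotient_mul_card_subgroup C
  have hBC : Nat.card (B : Subgroup G) = Nat.card (C : Subgroup G) :=
    Nat.card_congr ψ.toEquiv
  have hcard : Nat.card (G ⧸ B) = Nat.card (G ⧸ C) := by
    apply Nat.eq_of_mul_eq_mul_right hB
    rw [← h1]
    rw [hBC, ← h2]
  obtain ⟨f⟩ := Finite.card_eq.mp hcard
  refine ⟨⟨phiFun B C ψ f, phiFun C B ψ.symm f.symm, phiFun_inv B C ψ f, fun g => ?_⟩,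
    phiFun_equivariant B C ψ f⟩
  simpa using phiFun_inv C B ψ.symm f.symm g

theorem finiteGroups_hrushovski
    (G : Type) [Group G] [Finite G] (n : ℕ) (hn : 1 ≤ n)
    (B C : Fin n → Subgroup G) (ψ : ∀ i : Fin n, (B i) ≃* (C i)) :
    ∃ (D : Type) (_ : Group D) (_ : Finite D) (e : G →* D) (φ : Fin n → MulAut D),
      Function.Injective e ∧
      ∀ i : Fin n, ∀ b : B i, φ i (e b) = e (ψ i b) := by
  classical
  choose σ hσ using fun i => key (B i) (C i) (ψ i)
  let e : G →* Equiv.Perm G :=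
    { toFun := fun g => Equiv.mulRight g⁻¹
      map_one' := by ext x; simp
      map_mul' := by intro a b; ext x; simp [mul_assoc] }
  refine ⟨Equiv.Perm G, inferInstance, inferInstance, e, fun i => MulAut.conj (σ i), ?_, ?_⟩
  · intro a b h
    have := congrArg (fun p : Equiv.Perm G => p 1) h
    simpa [e] using this
  · intro i b
    ext x
    have key1 : ∀ y : G, σ i (y * ((b : G))⁻¹) = σ i y * ((ψ i b : G))⁻¹ := by
      intro y
      have h := hσ i (y * ((b : G))⁻¹) b
      rw [inv_mul_cancel_right] at h
      rw [h, mul_inv_cancel_right]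
    show (σ i * e b * (σ i)⁻¹) x = e (ψ i b) x
    simp only [Equiv.Perm.mul_apply, e, MonoidHom.coe_mk, OneHom.coe_mk,
      Equiv.coe_mulRight]
    rw [key1]
    exact congrArg (· * _) ((σ i).apply_symm_apply x)
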